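/- Let Z ∈ R^{n×m} be a random matrix with E[‾exp(λZ)] ≤ exp(λ²a²/2) for all λ ∈ R, where ‾exp(A) := (1/(n+m))·Tr exp([[0, A],[A^T, 0]]). Then for all δ ∈ (0,1), P(‖Z‖ ≥ a·√(2 log((n+m)/δ))) ≤ δ, with ‖·‖ the operator norm. -/

import Mathlib

open MeasureTheory Matrix

/-- Operator (spectral) norm of a real matrix, via its action on Euclidean space. -/
noncomputable def opNorm {m n : Type*} [Fintype m] [Fintype n] [DecidableEq n]
    (A : Matrix m n ℝ) : ℝ :=
  ‖LinearMap.toContinuousLinearMap (Matrix.toEuclideanLin A)‖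

/-- The symmetric dilation `[[0, A], [Aᵀ, 0]]` of a rectangular matrix `A`. -/
noncomputable def dilation {n m : ℕ} (A : Matrix (Fin n) (Fin m) ℝ) :
    Matrix (Fin n ⊕ Fin m) (Fin n ⊕ Fin m) ℝ :=
  Matrix.fromBlocks 0 A Aᵀ 0

/-- The normalized trace exponential `‾exp(A) = (1/(n+m))·Tr exp([[0,A],[Aᵀ,0]])`. -/
noncomputable def obexp {n m : ℕ} (A : Matrix (Fin n) (Fin m) ℝ) : ℝ :=
  ((n + m : ℕ) : ℝ)⁻¹ * (NormedSpace.exp (dilation A)).trace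


lemma trace_exp_eq_sum {ι : Type*} [Fintype ι] [DecidableEq ι]
    {B : Matrix ι ι ℝ} (hB : B.IsHermitian) :
    (NormedSpace.exp B).trace = ∑ i, Real.exp (hB.eigenvalues i) := by
  set U := Unitary.toUnits hB.eigenvectorUnitary with hU
  have h1 : B = (U : Matrix ι ι ℝ) * diagonal (RCLike.ofReal ∘ hB.eigenvalues) *
      ((U⁻¹ : (Matrix ι ι ℝ)ˣ) : Matrix ι ι ℝ) := hB.spectral_theorem
  calc (NormedSpace.exp B).trace
      = ((U : Matrix ι ι ℝ) * NormedSpace.exp (diagonal (RCLike.ofReal ∘ hB.eigenvalues)) *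
        ((U⁻¹ : (Matrix ι ι ℝ)ˣ) : Matrix ι ι ℝ)).trace := by
        rw [← Matrix.exp_units_conj, ← h1]
    _ = (NormedSpace.exp (diagonal (RCLike.ofReal ∘ hB.eigenvalues))).trace :=
        trace_units_conj U _
    _ = ∑ i, Real.exp (hB.eigenvalues i) := by
        rw [Matrix.exp_diagonal, trace_diagonal]
        refine Finset.sum_congr rfl fun i _ => ?_
        simp [Real.exp_eq_exp_ℝ]

lemma exp_le_trace_exp {ι : Type*} [Fintype ι] [DecidableEq ι]
    {B : Matrix ι ι ℝ} (hB : B.IsHermitian) {x : ℝ} (hx : x ∈ spectrum ℝ B) :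
    Real.exp x ≤ (NormedSpace.exp B).trace := by
  rw [trace_exp_eq_sum hB]
  obtain ⟨i, rfl⟩ := hB.spectrum_real_eq_range_eigenvalues ▸ hx
  exact Finset.single_le_sum (fun j _ => (Real.exp_pos _).le) (Finset.mem_univ i)

lemma exists_abs_eigenvalue_eq {ι : Type*} [Fintype ι] [DecidableEq ι] [Nonempty ι]
    {B : Matrix ι ι ℝ} (hB : B.IsHermitian) :
    ∃ i, ‖LinearMap.toContinuousLinearMap (Matrix.toEuclideanLin B)‖ ≤ |hB.eigenvalues i| := by
  obtain ⟨i, -, hi⟩ := Finset.exists_max_image Finset.univ (fun i => |hB.eigenvalues i|)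
    Finset.univ_nonempty
  refine ⟨i, ?_⟩
  set M := |hB.eigenvalues i| with hM
  apply ContinuousLinearMap.opNorm_le_bound _ (abs_nonneg _)
  intro x
  set b := hB.eigenvectorBasis with hbdef
  set T := LinearMap.toContinuousLinearMap (Matrix.toEuclideanLin B) with hT
  have hsymm : (Matrix.toEuclideanLin B).IsSymmetric := Matrix.isHermitian_iff_isSymmetric.1 hB
  have hrepr : ∀ j, b.repr (T x) j = hB.eigenvalues j * b.repr x j := by
    intro j
    rw [OrthonormalBasis.repr_apply_apply, OrthonormalBasis.repr_apply_apply]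
    have hb : Matrix.toEuclideanLin B (b j) = hB.eigenvalues j • b j := by
      apply PiLp.ext; intro k
      have := congrFun (hB.mulVec_eigenvectorBasis j) k
      simpa [Matrix.toEuclideanLin_apply] using this
    calc inner ℝ (b j) (T x)
        = inner ℝ (Matrix.toEuclideanLin B (b j)) x := (hsymm _ _).symm
      _ = hB.eigenvalues j * inner ℝ (b j) x := by
          rw [hb]; simp [real_inner_smul_left, Finset.mul_sum, mul_assoc]
  calc ‖T x‖ = Real.sqrt (∑ j, ‖b.repr (T x) j‖ ^ 2) := by
        rw [← b.repr.norm_map (T x), EuclideanSpace.norm_eq]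
    _ ≤ Real.sqrt (∑ j, M ^ 2 * ‖b.repr x j‖ ^ 2) := by
        apply Real.sqrt_le_sqrt
        apply Finset.sum_le_sum
        intro j _
        rw [hrepr j]
        have h1 : ‖hB.eigenvalues j * b.repr x j‖ ^ 2
            = |hB.eigenvalues j| ^ 2 * ‖b.repr x j‖ ^ 2 := by
          rw [norm_mul]; rw [mul_pow]; rw [Real.norm_eq_abs]
        rw [h1]
        exact mul_le_mul_of_nonneg_right
          (pow_le_pow_left₀ (abs_nonneg _) (hi j (Finset.mem_univ j)) 2) (by positivity)
    _ = M * Real.sqrt (∑ j, ‖b.repr x j‖ ^ 2) := by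
        rw [← Finset.mul_sum, Real.sqrt_mul (sq_nonneg M),
          Real.sqrt_sq (abs_nonneg _)]
    _ = M * ‖x‖ := by rw [← EuclideanSpace.norm_eq, b.repr.norm_map]

lemma dilation_isHermitian {n m : ℕ} (A : Matrix (Fin n) (Fin m) ℝ) :
    (dilation A).IsHermitian := by
  show (Matrix.fromBlocks 0 A Aᵀ 0)ᴴ = _
  rw [Matrix.fromBlocks_conjTranspose]
  simp [Matrix.conjTranspose_eq_transpose_of_trivial]
  rfl

lemma dilation_smul {n m : ℕ} (lam : ℝ) (A : Matrix (Fin n) (Fin m) ℝ) :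
    dilation (lam • A) = lam • dilation A := by
  simp [dilation, Matrix.fromBlocks_smul, Matrix.transpose_smul]

lemma opNorm_le_dilation {n m : ℕ} (A : Matrix (Fin n) (Fin m) ℝ) :
    opNorm A ≤ opNorm (dilation A) := by
  apply ContinuousLinearMap.opNorm_le_bound _ (norm_nonneg _)
  intro y
  set T := LinearMap.toContinuousLinearMap (Matrix.toEuclideanLin (dilation A)) with hTdef
  set v : EuclideanSpace ℝ (Fin n ⊕ Fin m) := WithLp.toLp 2 (Sum.elim (0 : Fin n → ℝ) y) with hvdef
  have hv : ‖v‖ = ‖y‖ := by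
    rw [EuclideanSpace.norm_eq, EuclideanSpace.norm_eq]
    congr 1
    rw [Fintype.sum_sum_type]
    simp [v]
  have hTv : T v = WithLp.toLp 2 (Sum.elim ((A *ᵥ y : Fin n → ℝ)) (0 : Fin m → ℝ) : Fin n ⊕ Fin m → ℝ) := by
    show Matrix.toEuclideanLin (dilation A) v = _
    apply PiLp.ext; intro k
    simp only [Matrix.toEuclideanLin_apply]
    have h2' : dilation A *ᵥ (Sum.elim (0 : Fin n → ℝ) y) =
        (Sum.elim ((A *ᵥ y : Fin n → ℝ)) (0 : Fin m → ℝ) : Fin n ⊕ Fin m → ℝ) := by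
      rw [dilation, Matrix.fromBlocks_mulVec]
      ext k
      cases k <;> simp
    exact congrFun h2' k
  have h1 : ‖LinearMap.toContinuousLinearMap (Matrix.toEuclideanLin A) y‖ = ‖T v‖ := by
    rw [hTv, EuclideanSpace.norm_eq, EuclideanSpace.norm_eq]
    congr 1
    rw [Fintype.sum_sum_type]
    simp [Matrix.toEuclideanLin_apply]
  rw [h1]
  calc ‖T v‖ ≤ ‖T‖ * ‖v‖ := T.le_opNorm v
    _ = opNorm (dilation A) * ‖y‖ := by rw [hv]; rfl

/-- the sign-flip conjugation matrix -/
noncomputable def flipS (n m : ℕ) : Matrix (Fin n ⊕ Fin m) (Fin n ⊕ Fin m) ℝ :=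
  Matrix.fromBlocks 1 0 0 (-1)

lemma flipS_mul_self (n m : ℕ) : flipS n m * flipS n m = 1 := by
  simp [flipS, Matrix.fromBlocks_multiply, ← Matrix.fromBlocks_one]

noncomputable def flipU (n m : ℕ) : (Matrix (Fin n ⊕ Fin m) (Fin n ⊕ Fin m) ℝ)ˣ :=
  ⟨flipS n m, flipS n m, flipS_mul_self n m, flipS_mul_self n m⟩

lemma flip_conj {n m : ℕ} (lam : ℝ) (A : Matrix (Fin n) (Fin m) ℝ) :
    (flipU n m : Matrix (Fin n ⊕ Fin m) (Fin n ⊕ Fin m) ℝ) * (lam • dilation A) *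
      (((flipU n m)⁻¹ : (Matrix (Fin n ⊕ Fin m) (Fin n ⊕ Fin m) ℝ)ˣ) :
        Matrix (Fin n ⊕ Fin m) (Fin n ⊕ Fin m) ℝ)
      = -(lam • dilation A) := by
  have h : (flipS n m) * dilation A * (flipS n m) = -(dilation A) := by
    simp [flipS, dilation, Matrix.fromBlocks_multiply, Matrix.fromBlocks_neg]
  show (flipS n m) * (lam • dilation A) * (flipS n m) = _
  rw [mul_smul_comm, smul_mul_assoc, h, smul_neg]

lemma trace_exp_neg {n m : ℕ} (lam : ℝ) (A : Matrix (Fin n) (Fin m) ℝ) :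
    (NormedSpace.exp (-(lam • dilation A))).trace
      = (NormedSpace.exp (lam • dilation A)).trace := by
  rw [← flip_conj lam A, Matrix.exp_units_conj, trace_units_conj]

lemma key_exp_le {n m : ℕ} (hnm : 0 < n + m) {lam : ℝ} (hlam : 0 ≤ lam)
    (A : Matrix (Fin n) (Fin m) ℝ) :
    Real.exp (lam * opNorm A) ≤ (NormedSpace.exp (dilation (lam • A))).trace := by
  have hne : Nonempty (Fin n ⊕ Fin m) := Fintype.card_pos_iff.mp (by simpa using hnm)
  rw [dilation_smul]
  set E := lam • dilation A with hE
  have hEh : E.IsHermitian := by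
    rw [hE]
    unfold Matrix.IsHermitian
    rw [Matrix.conjTranspose_smul, star_trivial, (dilation_isHermitian A)]
  obtain ⟨i, hi⟩ := exists_abs_eigenvalue_eq hEh
  have happ : ∀ x, Matrix.toEuclideanLin (lam • dilation A) x
      = lam • Matrix.toEuclideanLin (dilation A) x := by
    intro x
    apply PiLp.ext; intro k
    simp [Matrix.toEuclideanLin_apply, Matrix.smul_mulVec]
  have hnormE : lam * opNorm A ≤ |hEh.eigenvalues i| := by
    rcases hlam.eq_or_lt with rfl | hpos
    · simpa using abs_nonneg (hEh.eigenvalues i)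
    set TE := LinearMap.toContinuousLinearMap (Matrix.toEuclideanLin E) with hTE
    have h6 : opNorm (dilation A) ≤ ‖TE‖ / lam := by
      apply ContinuousLinearMap.opNorm_le_bound _ (div_nonneg (norm_nonneg _) hpos.le)
      intro x
      have h7 : ‖TE x‖ = lam * ‖LinearMap.toContinuousLinearMap
          (Matrix.toEuclideanLin (dilation A)) x‖ := by
        show ‖Matrix.toEuclideanLin E x‖ = _
        rw [hE, happ x, norm_smul, Real.norm_eq_abs, abs_of_nonneg hpos.le]
        rfl
      have h8 : ‖TE x‖ ≤ ‖TE‖ * ‖x‖ := TE.le_opNorm x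
      rw [h7] at h8
      rw [div_mul_eq_mul_div, le_div_iff₀ hpos, mul_comm _ lam]
      linarith
    calc lam * opNorm A ≤ lam * opNorm (dilation A) :=
          mul_le_mul_of_nonneg_left (opNorm_le_dilation A) hlam
      _ ≤ lam * (‖TE‖ / lam) := mul_le_mul_of_nonneg_left h6 hlam
      _ = ‖TE‖ := by field_simp
      _ ≤ |hEh.eigenvalues i| := hi
  rcases le_or_gt 0 (hEh.eigenvalues i) with hpos | hneg
  · have hmem : hEh.eigenvalues i ∈ spectrum ℝ E := hEh.eigenvalues_mem_spectrum_real i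
    calc Real.exp (lam * opNorm A) ≤ Real.exp (hEh.eigenvalues i) := by
          apply Real.exp_le_exp.2; rwa [abs_of_nonneg hpos] at hnormE
      _ ≤ _ := exp_le_trace_exp hEh hmem
  · have hmem : -hEh.eigenvalues i ∈ spectrum ℝ (-E) := by
      rw [← spectrum.neg_eq]
      exact Set.neg_mem_neg.2 (hEh.eigenvalues_mem_spectrum_real i)
    have hEnegh : (-E).IsHermitian := hEh.neg
    calc Real.exp (lam * opNorm A) ≤ Real.exp (-hEh.eigenvalues i) := by
          apply Real.exp_le_exp.2; rwa [abs_of_neg hneg] at hnormE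
      _ ≤ (NormedSpace.exp (-E)).trace := exp_le_trace_exp hEnegh hmem
      _ = _ := trace_exp_neg lam A

/-- Matrix MGF-to-tail conversion: if
`E[‾exp(λZ)] ≤ exp(λ²a²/2)` for all `λ`, then
`P(‖Z‖ ≥ a√(2 log((n+m)/δ))) ≤ δ`, with `‖·‖` the operator norm. -/
theorem matrix_mgf_tail
    {Ω : Type*} [MeasurableSpace Ω] (μ : Measure Ω) [IsProbabilityMeasure μ]
    {n m : ℕ} (hnm : 0 < n + m)
    (Z : Ω → Matrix (Fin n) (Fin m) ℝ) (hmeas : ∀ i j, Measurable fun ω => Z ω i j)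
    (a : ℝ) (ha : 0 < a)
    (hmgf : ∀ lam : ℝ,
      ∫⁻ ω, ENNReal.ofReal (obexp (lam • Z ω)) ∂μ ≤
        ENNReal.ofReal (Real.exp (lam ^ 2 * a ^ 2 / 2)))
    (δ : ℝ) (hδ : δ ∈ Set.Ioo (0 : ℝ) 1) :
    μ {ω | a * Real.sqrt (2 * Real.log ((n + m : ℕ) / δ)) ≤ opNorm (Z ω)} ≤
      ENNReal.ofReal δ := by
  obtain ⟨hδ0, hδ1⟩ := hδ
  set k : ℝ := ((n + m : ℕ) : ℝ) with hk
  have hk1 : (1 : ℝ) ≤ k := by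
    rw [hk]; exact_mod_cast hnm
  have hk0 : (0 : ℝ) < k := lt_of_lt_of_le one_pos hk1
  set L : ℝ := Real.log (k / δ) with hLdef
  have hkδ : 1 < k / δ := (one_lt_div hδ0).2 (lt_of_lt_of_le hδ1 hk1)
  have hL : 0 < L := Real.log_pos hkδ
  set t : ℝ := a * Real.sqrt (2 * L) with htdef
  have ht0 : 0 ≤ t := by positivity
  set lam : ℝ := Real.sqrt (2 * L) / a with hlamdef
  have hlam0 : 0 ≤ lam := by positivity
  have hsq : Real.sqrt (2 * L) ^ 2 = 2 * L := Real.sq_sqrt (by positivity)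
  have hlamt : lam * t = 2 * L := by
    calc lam * t = Real.sqrt (2 * L) ^ 2 * (a / a) := by rw [hlamdef, htdef]; ring
      _ = 2 * L := by rw [div_self (ne_of_gt ha), hsq, mul_one]
  have hlam2 : lam ^ 2 * a ^ 2 / 2 = L := by
    calc lam ^ 2 * a ^ 2 / 2 = Real.sqrt (2 * L) ^ 2 * (a ^ 2 / a ^ 2) / 2 := by
          rw [hlamdef]; ring
      _ = L := by rw [div_self (by positivity : (a : ℝ) ^ 2 ≠ 0), hsq, mul_one]; ring
  have hexpL : Real.exp L = k / δ := Real.exp_log (by positivity)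
  -- the target set
  set S : Set Ω := {ω | t ≤ opNorm (Z ω)} with hS
  -- measurability
  letI : MeasurableSpace (Matrix (Fin n) (Fin m) ℝ) :=
    inferInstanceAs (MeasurableSpace (Fin n → Fin m → ℝ))
  letI : BorelSpace (Matrix (Fin n) (Fin m) ℝ) :=
    inferInstanceAs (BorelSpace (Fin n → Fin m → ℝ))
  have hZ : Measurable fun ω => Z ω :=
    measurable_pi_lambda _ fun i => measurable_pi_lambda _ fun j => hmeas i j
  have hopcont : Continuous fun A : Matrix (Fin n) (Fin m) ℝ => opNorm A := by
    have : Continuous fun A : Matrix (Fin n) (Fin m) ℝ =>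
        LinearMap.toContinuousLinearMap (Matrix.toEuclideanLin A) := by
      apply LinearMap.continuous_of_finiteDimensional
        (f := (LinearMap.toContinuousLinearMap.toLinearMap.comp
          (Matrix.toEuclideanLin (𝕜 := ℝ) (m := Fin n) (n := Fin m)).toLinearMap))
    exact continuous_norm.comp this
  have hSmeas : MeasurableSet S :=
    measurableSet_le measurable_const ((hopcont.measurable).comp hZ)
  -- pointwise bound on S
  have hkey : ∀ ω ∈ S, ENNReal.ofReal (Real.exp (lam * t)) ≤
      ENNReal.ofReal k * ENNReal.ofReal (obexp (lam • Z ω)) := by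
    intro ω hω
    rw [← ENNReal.ofReal_mul hk0.le]
    apply ENNReal.ofReal_le_ofReal
    have h1 : Real.exp (lam * t) ≤ Real.exp (lam * opNorm (Z ω)) :=
      Real.exp_le_exp.2 (mul_le_mul_of_nonneg_left hω hlam0)
    have h2 := key_exp_le hnm hlam0 (Z ω)
    have h3 : k * obexp (lam • Z ω) = (NormedSpace.exp (dilation (lam • Z ω))).trace := by
      rw [obexp, ← hk, ← mul_assoc, mul_inv_cancel₀ (ne_of_gt hk0), one_mul]
    rw [h3]
    exact h1.trans h2
  -- Markov
  have hmarkov : ENNReal.ofReal (Real.exp (lam * t)) * μ S ≤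
      ENNReal.ofReal k * ENNReal.ofReal (Real.exp (lam ^ 2 * a ^ 2 / 2)) := by
    calc ENNReal.ofReal (Real.exp (lam * t)) * μ S
        = ∫⁻ ω, S.indicator (fun _ => ENNReal.ofReal (Real.exp (lam * t))) ω ∂μ := by
          rw [lintegral_indicator_const hSmeas]
      _ ≤ ∫⁻ ω, ENNReal.ofReal k * ENNReal.ofReal (obexp (lam • Z ω)) ∂μ := by
          apply lintegral_mono
          intro ω
          by_cases hω : ω ∈ S
          · rw [Set.indicator_of_mem hω]; exact hkey ω hω
          · rw [Set.indicator_of_notMem hω]; exact zero_le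
      _ = ENNReal.ofReal k * ∫⁻ ω, ENNReal.ofReal (obexp (lam • Z ω)) ∂μ :=
          lintegral_const_mul' _ _ ENNReal.ofReal_ne_top
      _ ≤ ENNReal.ofReal k * ENNReal.ofReal (Real.exp (lam ^ 2 * a ^ 2 / 2)) :=
          mul_le_mul_right (hmgf lam) _
  -- arithmetic
  have hreal : k * Real.exp (lam ^ 2 * a ^ 2 / 2) = δ * Real.exp (lam * t) := by
    rw [hlam2, hlamt, hexpL, two_mul, Real.exp_add, hexpL]
    field_simp
  have hfinal : ENNReal.ofReal k * ENNReal.ofReal (Real.exp (lam ^ 2 * a ^ 2 / 2))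
      = ENNReal.ofReal δ * ENNReal.ofReal (Real.exp (lam * t)) := by
    rw [← ENNReal.ofReal_mul hk0.le, hreal, ENNReal.ofReal_mul hδ0.le]
  rw [hfinal] at hmarkov
  rw [mul_comm] at hmarkov
  have := (ENNReal.mul_le_mul_iff_left (a := μ S) (b := ENNReal.ofReal δ)
    (ne_of_gt (ENNReal.ofReal_pos.2 (Real.exp_pos _))) ENNReal.ofReal_ne_top).1 hmarkov
  exact this
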